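/- If p and q are basic open subsets of T and X ∈ p ∩ q, then there exists a basic open subset r of T with X ∈ r and r ⊆ p ∩ q; hence the intersection of two basic open sets is a union of basic open sets, so the basic open sets form a sub-basis generating a topology on T in which they are open. -/

import Mathlib

/-- A sequence of rationals is Cauchy: for every rational `ε > 0` there is `N`
such that `|x m - x n| < ε` for all `m, n ≥ N`. -/
def RatCauchy (x : ℕ → ℚ) : Prop :=
  ∀ ε : ℚ, 0 < ε → ∃ N : ℕ, ∀ m n : ℕ, N ≤ m → N ≤ n → |x m - x n| < ε

/-- The real limit of a sequence of rationals (meaningful when the sequence is Cauchy). -/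
noncomputable def rlim (x : ℕ → ℚ) : ℝ :=
  Filter.limUnder Filter.atTop (fun n => ((x n : ℝ)))

/-- Membership in the space `T`: each `X j` is a Cauchy sequence of rationals, and
the real sequence of their limits is Cauchy. -/
def InT (X : ℕ → ℕ → ℚ) : Prop :=
  (∀ j, RatCauchy (X j)) ∧
  ∀ ε : ℝ, 0 < ε → ∃ N : ℕ, ∀ j k : ℕ, N ≤ j → N ≤ k →
    |rlim (X j) - rlim (X k)| < ε

/-- The data of a basic open set: a natural number `n`, for each `j < n` a finite
list `p j` of rationals and an open interval `(lo j, hi j)`, and a final open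
interval `(Lo, Hi)`. -/
structure BOpen where
  n : ℕ
  p : ℕ → List ℚ
  lo : ℕ → ℝ
  hi : ℕ → ℝ
  Lo : ℝ
  Hi : ℝ

/-- The set of points of `T` belonging to the basic open set `c`. -/
def BOSet (c : BOpen) : Set (ℕ → ℕ → ℚ) :=
  {X | InT X ∧
    (∀ j : ℕ, j < c.n →
      ((∀ i : ℕ, ∀ h : i < (c.p j).length, X j i = (c.p j).get ⟨i, h⟩) ∧
       (∀ i : ℕ, (c.p j).length ≤ i → ((X j i : ℝ)) ∈ Set.Ioo (c.lo j) (c.hi j)) ∧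
       rlim (X j) ∈ Set.Ioo (c.lo j) (c.hi j))) ∧
    (∀ j : ℕ, c.n ≤ j → rlim (X j) ∈ Set.Ioo c.Lo c.Hi) ∧
    ∃ L : ℝ, Filter.Tendsto (fun j => rlim (X j)) Filter.atTop (nhds L) ∧
      L ∈ Set.Ioo c.Lo c.Hi}
lemma tendsto_rlim {x : ℕ → ℚ} (hx : RatCauchy x) :
    Filter.Tendsto (fun n => ((x n : ℝ))) Filter.atTop (nhds (rlim x)) := by
  have hc : CauchySeq (fun n => ((x n : ℝ))) := by
    rw [Metric.cauchySeq_iff]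
    intro ε hε
    obtain ⟨q, hq0, hqε⟩ := exists_rat_btwn hε
    obtain ⟨N, hN⟩ := hx q (by exact_mod_cast hq0)
    refine ⟨N, fun m hm n hn => ?_⟩
    have := hN m n hm hn
    rw [Real.dist_eq]
    calc |(x m : ℝ) - (x n : ℝ)| = ((|x m - x n| : ℚ) : ℝ) := by push_cast; ring_nf
    _ < (q : ℝ) := by exact_mod_cast this
    _ < ε := hqε
  obtain ⟨L, hL⟩ := cauchySeq_tendsto_of_complete hc
  have : rlim x = L := hL.limUnder_eq
  rw [this]; exact hL

lemma BOSet_mono (r p : BOpen)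
    (hn : p.n ≤ r.n)
    (hlen : ∀ j, j < p.n → (p.p j).length ≤ (r.p j).length)
    (hpre : ∀ j (hj : j < p.n) i (h : i < (p.p j).length)
      (h' : i < (r.p j).length), (r.p j).get ⟨i, h'⟩ = (p.p j).get ⟨i, h⟩)
    (hmid : ∀ j (hj : j < p.n) i (h : (p.p j).length ≤ i)
      (h' : i < (r.p j).length), (((r.p j).get ⟨i, h'⟩ : ℚ) : ℝ) ∈ Set.Ioo (p.lo j) (p.hi j))
    (hio : ∀ j, j < p.n → Set.Ioo (r.lo j) (r.hi j) ⊆ Set.Ioo (p.lo j) (p.hi j))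
    (hmid2 : ∀ j, p.n ≤ j → j < r.n → Set.Ioo (r.lo j) (r.hi j) ⊆ Set.Ioo p.Lo p.Hi)
    (houter : Set.Ioo r.Lo r.Hi ⊆ Set.Ioo p.Lo p.Hi) :
    BOSet r ⊆ BOSet p := by
  rintro Y ⟨hT, h1, h2, L, hL, hLmem⟩
  refine ⟨hT, ?_, ?_, L, hL, houter hLmem⟩
  · intro j hj
    have hjr := lt_of_lt_of_le hj hn
    obtain ⟨e1, e2, e3⟩ := h1 j hjr
    refine ⟨?_, ?_, hio j hj e3⟩
    · intro i h
      have h' : i < (r.p j).length := lt_of_lt_of_le h (hlen j hj)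
      rw [e1 i h']; exact hpre j hj i h h'
    · intro i h
      by_cases h' : i < (r.p j).length
      · rw [e1 i h']; exact hmid j hj i h h'
      · exact hio j hj (e2 i (le_of_not_gt h'))
  · intro j hj
    by_cases h' : j < r.n
    · exact hmid2 j hj h' (h1 j h').2.2
    · exact houter (h2 j (le_of_not_gt h'))

theorem stmt14 :
    (∀ (p q : BOpen) (X : ℕ → ℕ → ℚ), X ∈ BOSet p ∩ BOSet q →
      ∃ r : BOpen, X ∈ BOSet r ∧ BOSet r ⊆ BOSet p ∩ BOSet q) ∧
    (∀ p q : BOpen, ∃ 𝒮 : Set BOpen, BOSet p ∩ BOSet q = ⋃ r ∈ 𝒮, BOSet r) ∧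
    (∀ c : BOpen,
      (TopologicalSpace.generateFrom {s : Set (ℕ → ℕ → ℚ) | ∃ d : BOpen, s = BOSet d}).IsOpen
        (BOSet c)) := by
  have main : ∀ (p q : BOpen) (X : ℕ → ℕ → ℚ), X ∈ BOSet p ∩ BOSet q →
      ∃ r : BOpen, X ∈ BOSet r ∧ BOSet r ⊆ BOSet p ∩ BOSet q := by
    rintro p q X ⟨⟨hT, hp1, hp2, Lp, hLp, hLpmem⟩, ⟨_, hq1, hq2, Lq, hLq, hLqmem⟩⟩
    have hLpq : Lq = Lp := tendsto_nhds_unique hLq hLp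
    subst hLpq
    set targ : ℕ → Set ℝ := fun j =>
      (if j < p.n then Set.Ioo (p.lo j) (p.hi j) else Set.Ioo p.Lo p.Hi) ∩
      (if j < q.n then Set.Ioo (q.lo j) (q.hi j) else Set.Ioo q.Lo q.Hi) with htarg
    have htargmem : ∀ j, rlim (X j) ∈ targ j := by
      intro j
      constructor
      · by_cases h : j < p.n
        · simpa [h] using (hp1 j h).2.2
        · simpa [h] using hp2 j (le_of_not_gt h)
      · by_cases h : j < q.n
        · simpa [h] using (hq1 j h).2.2
        · simpa [h] using hq2 j (le_of_not_gt h)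
    have htargopen : ∀ j, IsOpen (targ j) := by
      intro j
      apply IsOpen.inter <;> (split <;> exact isOpen_Ioo)
    have key : ∀ j : ℕ, ∃ a b : ℝ, ∃ N : ℕ,
        rlim (X j) ∈ Set.Ioo a b ∧
        Set.Ioo a b ⊆ targ j ∧
        (∀ i, N ≤ i → ((X j i : ℝ)) ∈ Set.Ioo a b) ∧
        (p.p j).length ≤ N ∧ (q.p j).length ≤ N := by
      intro j
      obtain ⟨ε, hε, hball⟩ := Metric.isOpen_iff.1 (htargopen j) _ (htargmem j)
      rw [Real.ball_eq_Ioo] at hball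
      have hmem : rlim (X j) ∈ Set.Ioo (rlim (X j) - ε) (rlim (X j) + ε) := by
        constructor <;> simp [hε]
      have := (tendsto_rlim (hT.1 j)).eventually
        (isOpen_Ioo.mem_nhds hmem : Set.Ioo (rlim (X j) - ε) (rlim (X j) + ε) ∈ nhds (rlim (X j)))
      obtain ⟨N0, hN0⟩ := Filter.eventually_atTop.1 this
      refine ⟨rlim (X j) - ε, rlim (X j) + ε, max N0 (max (p.p j).length (q.p j).length),
        hmem, hball, fun i hi => hN0 i (le_trans (le_max_left _ _) hi), ?_, ?_⟩
      · exact le_trans (le_trans (le_max_left _ _) (le_max_right _ _)) le_rfl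
      · exact le_trans (le_trans (le_max_right _ _) (le_max_right _ _)) le_rfl
    choose a b N hmem hsub htail hlenp hlenq using key
    set r : BOpen := ⟨max p.n q.n, fun j => List.ofFn (fun i : Fin (N j) => X j i),
      a, b, max p.Lo q.Lo, min p.Hi q.Hi⟩ with hr
    have hrlen : ∀ j, (r.p j).length = N j := fun j => by simp [hr]
    have hrget : ∀ j i (h : i < (r.p j).length), (r.p j).get ⟨i, h⟩ = X j i := by
      intro j i h
      simp [hr, List.get_ofFn]
    have hsubp : BOSet r ⊆ BOSet p := by
      apply BOSet_mono
      · exact le_max_left _ _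
      · intro j hj; rw [hrlen]; exact hlenp j
      · intro j hj i h h'; rw [hrget]; exact (hp1 j hj).1 i h
      · intro j hj i h h'; rw [hrget]; exact (hp1 j hj).2.1 i h
      · intro j hj
        refine (hsub j).trans ?_
        intro x hx; exact (by simpa [htarg, hj] using hx.1)
      · intro j hj1 hj2
        refine (hsub j).trans ?_
        intro x hx; exact (by simpa [htarg, not_lt.2 hj1] using hx.1)
      · exact Set.Ioo_subset_Ioo (le_max_left _ _) (min_le_left _ _)
    have hsubq : BOSet r ⊆ BOSet q := by
      apply BOSet_mono
      · exact le_max_right _ _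
      · intro j hj; rw [hrlen]; exact hlenq j
      · intro j hj i h h'; rw [hrget]; exact (hq1 j hj).1 i h
      · intro j hj i h h'; rw [hrget]; exact (hq1 j hj).2.1 i h
      · intro j hj
        refine (hsub j).trans ?_
        intro x hx; exact (by simpa [htarg, hj] using hx.2)
      · intro j hj1 hj2
        refine (hsub j).trans ?_
        intro x hx; exact (by simpa [htarg, not_lt.2 hj1] using hx.2)
      · exact Set.Ioo_subset_Ioo (le_max_right _ _) (min_le_right _ _)
    refine ⟨r, ⟨⟨hT, ?_, ?_, Lq, hLq, ?_⟩, fun Y hY => ⟨hsubp hY, hsubq hY⟩⟩⟩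
    · intro j hj
      refine ⟨?_, ?_, hmem j⟩
      · intro i h; rw [hrget]
      · intro i h; rw [hrlen] at h; exact htail j i h
    · intro j hj
      simp only [hr] at hj ⊢
      exact ⟨max_lt_iff.2 ⟨(hp2 j (le_of_max_le_left hj)).1, (hq2 j (le_of_max_le_right hj)).1⟩,
        lt_min_iff.2 ⟨(hp2 j (le_of_max_le_left hj)).2, (hq2 j (le_of_max_le_right hj)).2⟩⟩
    · exact ⟨max_lt_iff.2 ⟨hLpmem.1, hLqmem.1⟩, lt_min_iff.2 ⟨hLpmem.2, hLqmem.2⟩⟩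
  refine ⟨main, ?_, ?_⟩
  · intro p q
    refine ⟨{r | BOSet r ⊆ BOSet p ∩ BOSet q}, ?_⟩
    apply Set.Subset.antisymm
    · intro X hX
      obtain ⟨r, hXr, hrsub⟩ := main p q X hX
      exact Set.mem_biUnion hrsub hXr
    · intro X hX
      obtain ⟨r, hr, hXr⟩ := Set.mem_iUnion₂.1 hX
      exact hr hXr
  · intro c
    exact TopologicalSpace.GenerateOpen.basic _ ⟨c, rfl⟩
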